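/- For every essential variable x_i of f ∈ P_k^n there exists an implementation of f ending with x_i: that is, there exist distinct variables x_{j_1},...,x_{j_{m-1}} (all different from x_i), constants c_1,...,c_{m-1}, c_i, c ∈ Z_k with m ≤ ess(f), such that each successive variable is essential in the current subfunction, x_i is essential in f(x_{j_1}=c_1,...,x_{j_{m-1}}=c_{m-1}), and substituting x_i = c_i yields the constant c. -/

import Mathlib

open scoped Classical

namespace Paper

/-- A `k`-valued function of `n` variables. -/
abbrev Fn (k n : ℕ) : Type := (Fin n → ZMod k) → ZMod k

/-- `x i` is an essential variable of `f`. -/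
def Essential {k n : ℕ} (f : Fn k n) (i : Fin n) : Prop :=
  ∃ (a : Fin n → ZMod k) (b : ZMod k), f (Function.update a i b) ≠ f a

/-- The set of essential variables of `f`. -/
def Ess {k n : ℕ} (f : Fn k n) : Set (Fin n) := {i | Essential f i}

/-- The subfunction `f(x i = c)`. -/
def substVar {k n : ℕ} (f : Fn k n) (i : Fin n) (c : ZMod k) : Fn k n :=
  fun a => f (Function.update a i c)

/-- Substitute the constants `c` for all variables in the set `J`. -/
noncomputable def substSet {k n : ℕ} (f : Fn k n) (J : Set (Fin n)) (c : Fin n → ZMod k) : Fn k n :=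
  fun a => f (fun i => if i ∈ J then c i else a i)

/-- `g` is a simple subfunction of `f`: obtained by substituting a constant
for an essential variable of `f`. -/
def SimpleSub {k n : ℕ} (g f : Fn k n) : Prop :=
  ∃ i ∈ Ess f, ∃ c : ZMod k, g = substVar f i c

/-- `Sub f` is the set of all subfunctions of `f` (reflexive-transitive closure of
the simple subfunction relation). -/
def Sub {k n : ℕ} (f : Fn k n) : Set (Fn k n) :=
  {g | Relation.ReflTransGen (fun u v => SimpleSub v u) f g}

/-- `M` is a separable set of variables in `f`: `M = Ess g` for some subfunction `g`. -/
def Separable {k n : ℕ} (f : Fn k n) (M : Set (Fin n)) : Prop :=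
  ∃ g ∈ Sub f, Ess g = M

/-- Separability phrased via simultaneous substitution for a set of variables. -/
def SeparableS {k n : ℕ} (f : Fn k n) (M : Set (Fin n)) : Prop :=
  ∃ (J : Set (Fin n)) (c : Fin n → ZMod k), Ess (substSet f J c) = M

/-- `J` is a set of essential variables disjoint from `M` such that every assignment of
constants to `J` destroys some variable of `M`. -/
def Kills {k n : ℕ} (f : Fn k n) (M J : Set (Fin n)) : Prop :=
  J ⊆ Ess f ∧ J ∩ M = ∅ ∧ ∀ c : Fin n → ZMod k, ¬ M ⊆ Ess (substSet f J c)

/-- `Dis f M` : the family of all distributive sets of `M` in `f`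
(inclusion-minimal sets `J` with `Kills f M J`). -/
def Dis {k n : ℕ} (f : Fn k n) (M : Set (Fin n)) : Set (Set (Fin n)) :=
  {J | Kills f M J ∧ ∀ J' ⊆ J, Kills f M J' → J' = J}

/-- `β` is an s-system of the family `F`. -/
def IsSSystem {n : ℕ} (F : Set (Set (Fin n))) (β : Set (Fin n)) : Prop :=
  (∀ P ∈ F, (β ∩ P).Nonempty) ∧ ∀ x ∈ β, ∃ P ∈ F, P ∩ β = {x}

/-- `x i` is a strongly essential variable of `f`. -/
def StronglyEssential {k n : ℕ} (f : Fn k n) (i : Fin n) : Prop :=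
  i ∈ Ess f ∧ ∃ c : ZMod k, Ess (substVar f i c) = Ess f \ {i}

/-- The number of subfunctions of `f` having exactly `m` essential variables. -/
noncomputable def subCount {k n : ℕ} (f : Fn k n) (m : ℕ) : ℕ :=
  Set.ncard {g ∈ Sub f | (Ess g).ncard = m}

/-- `IsImp f l c` : the list `l` of (variable, constant) substitutions together with the
final value `c` is an implementation of `f`, i.e. a root-to-leaf path in a reduced
ordered decision diagram of `f`: each substituted variable is essential in the current
subfunction, and the final subfunction is the constant `c`. -/
inductive IsImp {k n : ℕ} : Fn k n → List (Fin n × ZMod k) → ZMod k → Prop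
  | const (f : Fn k n) (c : ZMod k) : (∀ a, f a = c) → IsImp f [] c
  | step (f : Fn k n) (i : Fin n) (a : ZMod k) (l : List (Fin n × ZMod k)) (c : ZMod k) :
      i ∈ Ess f → IsImp (substVar f i a) l c → IsImp f ((i, a) :: l) c

/-- The number of implementations of `f`. -/
noncomputable def imp {k n : ℕ} (f : Fn k n) : ℕ :=
  Set.ncard {p : List (Fin n × ZMod k) × ZMod k | IsImp f p.1 p.2}

end Paper

namespace PaperAux

open Paper

lemma ess_substVar_subset {k n : ℕ} (f : Fn k n) (j : Fin n) (c : ZMod k) :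
    Ess (substVar f j c) ⊆ Ess f \ {j} := by
  rintro i ⟨a, b, hab⟩
  unfold substVar at hab
  constructor
  · by_cases hij : i = j
    · subst hij
      rw [Function.update_idem] at hab
      exact absurd rfl hab
    · exact ⟨Function.update a j c, b, by
        rwa [Function.update_comm hij] at hab⟩
  · intro h
    simp only [Set.mem_singleton_iff] at h
    subst h
    rw [Function.update_idem] at hab
    exact hab rfl

lemma constant_of_ess_empty {k n : ℕ} (g : Fn k n) (h : Ess g = ∅) :
    ∃ c, ∀ a, g a = c := by
  have hne : ∀ j : Fin n, ∀ (x : Fin n → ZMod k) (b : ZMod k),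
      g (Function.update x j b) = g x := by
    intro j x b
    by_contra hc
    have : j ∈ Ess g := ⟨x, b, hc⟩
    simp [h] at this
  classical
  refine ⟨g (fun _ => 0), ?_⟩
  intro a
  have key : ∀ s : Finset (Fin n), ∀ x : Fin n → ZMod k,
      (∀ j ∉ s, x j = a j) → g x = g a := by
    intro s
    induction s using Finset.induction_on with
    | empty =>
      intro x hx
      have : x = a := funext fun j => hx j (by simp)
      rw [this]
    | insert _ _ hjs ih =>
      rename_i j s
      intro x hx
      have h1 : g x = g (Function.update x j (a j)) := (hne j x (a j)).symm
      rw [h1]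
      apply ih
      intro j' hj'
      by_cases hjj : j' = j
      · subst hjj; simp
      · rw [Function.update_of_ne hjj]
        exact hx j' (by simp [hjj, hj'])
  have h1 := key Finset.univ (fun _ => 0) (by simp)
  have h2 := key Finset.univ a (by simp)
  rw [h2, ← h1]

lemma vars_mem_ess {k n : ℕ} {g : Fn k n} {l : List (Fin n × ZMod k)} {c : ZMod k}
    (h : IsImp g l c) : ∀ p ∈ l, p.1 ∈ Ess g := by
  induction h with
  | const => simp
  | step f i a l c hi _ ih =>
    intro p hp
    rcases List.mem_cons.mp hp with h | h
    · subst h; exact hi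
    · exact (ess_substVar_subset f i a (ih p h)).1

lemma main {k n : ℕ} : ∀ (N : ℕ) (f : Fn k n) (i : Fin n),
    (Ess f).ncard ≤ N → i ∈ Ess f →
    ∃ (l : List (Fin n × ZMod k)) (ci c : ZMod k),
      IsImp f (l ++ [(i, ci)]) c ∧
      ((l ++ [(i, ci)]).map Prod.fst).Nodup ∧
      (l ++ [(i, ci)]).length ≤ (Ess f).ncard := by
  intro N
  induction N with
  | zero =>
    intro f i hN hi
    exact absurd hN (by
      have : 0 < (Ess f).ncard := (Set.ncard_pos (Set.toFinite _)).mpr ⟨i, hi⟩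
      omega)
  | succ N ih =>
    intro f i hN hi
    by_cases hcase : ∃ j ∈ Ess f, j ≠ i
    · obtain ⟨j, hj, hji⟩ := hcase
      obtain ⟨x, b, hxb⟩ := hi
      set g := substVar f j (x j) with hg
      have hig : i ∈ Ess g := by
        refine ⟨x, b, ?_⟩
        show f (Function.update (Function.update x i b) j (x j)) ≠
          f (Function.update x j (x j))
        have h1 : Function.update (Function.update x i b) j (x j) =
            Function.update x i b := by
          funext t
          by_cases ht : t = j
          · subst ht; simp [Function.update_of_ne hji b x]
          · rw [Function.update_of_ne ht]
        rw [h1, Function.update_eq_self]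
        exact hxb
      have hsub : Ess g ⊆ Ess f \ {j} := ess_substVar_subset f j (x j)
      have hfin : (Ess f).Finite := Set.toFinite _
      have hcard : (Ess g).ncard ≤ (Ess f).ncard - 1 := by
        calc (Ess g).ncard ≤ (Ess f \ {j}).ncard :=
              Set.ncard_le_ncard hsub hfin.diff
          _ = (Ess f).ncard - 1 := Set.ncard_diff_singleton_of_mem hj
      have hpos : 0 < (Ess f).ncard := (Set.ncard_pos (Set.toFinite _)).mpr ⟨i, x, b, hxb⟩
      obtain ⟨l, ci, c, himp, hnd, hlen⟩ := ih g i (by omega) hig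
      refine ⟨(j, x j) :: l, ci, c, ?_, ?_, ?_⟩
      · exact IsImp.step f j (x j) _ c hj himp
      · simp only [List.cons_append, List.map_cons, List.nodup_cons]
        refine ⟨?_, hnd⟩
        intro hmem
        obtain ⟨p, hp, hp1⟩ := List.mem_map.mp hmem
        have := vars_mem_ess himp p hp
        rw [hp1] at this
        exact (hsub this).2 rfl
      · simp only [List.cons_append, List.length_cons]
        have := hlen
        simp only [List.length_append, List.length_singleton] at this ⊢
        omega
    · push_neg at hcase
      have hEss : Ess f = {i} := by
        apply Set.eq_singleton_iff_unique_mem.mpr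
        exact ⟨hi, fun j hj => hcase j hj⟩
      have hempty : Ess (substVar f i 0) = ∅ := by
        apply Set.eq_empty_of_subset_empty
        intro t ht
        have := ess_substVar_subset f i 0 ht
        rw [hEss] at this
        simp at this
      obtain ⟨c, hc⟩ := constant_of_ess_empty _ hempty
      refine ⟨[], 0, c, ?_, by simp, ?_⟩
      · exact IsImp.step f i 0 [] c hi (IsImp.const _ c hc)
      · simp [hEss]

end PaperAux

open Paper in
/-- for every essential variable `x i` of `f` there is an implementation of
`f` ending with `x i`: a chain of substitutions of constants for distinct variables, each
essential at the moment of substitution, whose last substituted variable is `x i`,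
terminating in a constant, of length at most `ess f`. -/
theorem implementation_ending_with {k n : ℕ} (hk : 2 ≤ k) (f : Fn k n)
    (i : Fin n) (hi : i ∈ Ess f) :
    ∃ (l : List (Fin n × ZMod k)) (ci c : ZMod k),
      IsImp f (l ++ [(i, ci)]) c ∧
      ((l ++ [(i, ci)]).map Prod.fst).Nodup ∧
      (l ++ [(i, ci)]).length ≤ (Ess f).ncard := by
  exact PaperAux.main (Ess f).ncard f i le_rfl hi
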